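/- Let M₀, M₁ and N₀, N₁ be subspaces of a Hilbert space. Then (M₀+N₀) ∩ (M₁+N₁) ⊆ N₀ + (M₀ ∩ (M₁ + ((M₀+M₁) ∩ (N₀+N₁)))). -/
import Mathlib

/-- For subspaces of a Hilbert space (subspace sum = `⊔` of submodules,
intersection = `⊓`):
`(M₀+N₀) ∩ (M₁+N₁) ⊆ N₀ + (M₀ ∩ (M₁ + ((M₀+M₁) ∩ (N₀+N₁))))`. -/
theorem stmt_11 {H : Type*} [NormedAddCommGroup H] [InnerProductSpace ℂ H]
    (M₀ M₁ N₀ N₁ : Submodule ℂ H) :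
    (M₀ ⊔ N₀) ⊓ (M₁ ⊔ N₁) ≤ N₀ ⊔ (M₀ ⊓ (M₁ ⊔ ((M₀ ⊔ M₁) ⊓ (N₀ ⊔ N₁)))) := by
  rintro x ⟨hx0, hx1⟩
  simp only [SetLike.mem_coe] at hx0 hx1
  rw [Submodule.mem_sup] at hx0 hx1
  obtain ⟨m₀, hm₀, n₀, hn₀, rfl⟩ := hx0
  obtain ⟨m₁, hm₁, n₁, hn₁, hx⟩ := hx1
  have key : m₀ ∈ M₀ ⊓ (M₁ ⊔ ((M₀ ⊔ M₁) ⊓ (N₀ ⊔ N₁))) := by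
    refine ⟨hm₀, Submodule.mem_sup.2 ⟨m₁, hm₁, n₁ - n₀, ⟨?_, ?_⟩, by rw [show m₀ = m₁ + n₁ - n₀ from by rw [hx]; abel]; abel⟩⟩
    · have : n₁ - n₀ = m₀ - m₁ := by rw [sub_eq_sub_iff_add_eq_add, add_comm n₁ m₁]; exact hx
      rw [this]
      exact Submodule.mem_sup.2 ⟨m₀, hm₀, -m₁, neg_mem hm₁, by abel⟩
    · exact Submodule.mem_sup.2 ⟨-n₀, neg_mem hn₀, n₁, hn₁, by abel⟩
  exact Submodule.mem_sup.2 ⟨n₀, hn₀, m₀, key, by abel⟩
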